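/- Suppose G acts continuously and properly on M. Let a : M → ℝ be a continuous G-invariant function, let K ⊆ M be compact, set Y := G•K, and suppose there is c > 0 such that a(x) ≥ c for all x ∈ M ∖ Y. Then there exist a continuous, nonnegative, G-invariant function f : M → ℝ whose support is contained in G•K′ for some compact K′ ⊆ M, and a constant r > 0, such that a(x) + f(x) ≥ r for every x ∈ M. -/

import Mathlib

open MeasureTheory Pointwise

/-- Auxiliary: for a proper action, the "transporter" set of group elements moving a
compact set `A` into a compact set `B` is compact. -/
lemma isCompact_transporter_aux
    {G : Type*} [Group G] [TopologicalSpace G]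
    {M : Type*} [TopologicalSpace M]
    [MulAction G M]
    (hproper : IsProperMap (fun p : G × M => (p.1 • p.2, p.2)))
    {A B : Set M} (hA : IsCompact A) (hB : IsCompact B) :
    IsCompact {g : G | ∃ m ∈ A, g • m ∈ B} := by
  have hS : IsCompact ((fun p : G × M => (p.1 • p.2, p.2)) ⁻¹' (B ×ˢ A)) :=
    hproper.isCompact_preimage (hB.prod hA)
  have heq : {g : G | ∃ m ∈ A, g • m ∈ B} =
      Prod.fst '' ((fun p : G × M => (p.1 • p.2, p.2)) ⁻¹' (B ×ˢ A)) := by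
    ext g
    constructor
    · rintro ⟨m, hmA, hmB⟩
      exact ⟨(g, m), ⟨hmB, hmA⟩, rfl⟩
    · rintro ⟨⟨g', m⟩, ⟨hmB, hmA⟩, rfl⟩
      exact ⟨m, hmA, hmB⟩
  rw [heq]
  exact hS.image continuous_fst

/-- A continuous `G`-invariant function that is bounded below by `c > 0` outside a
cocompact set can be made uniformly positive by adding a continuous, nonnegative,
`G`-invariant, cocompactly supported bump function. -/
theorem exists_invariant_bump_of_pos_outside_cocompact
    {G : Type*} [Group G] [TopologicalSpace G] [IsTopologicalGroup G]
    [LocallyCompactSpace G] [T2Space G] [MeasurableSpace G] [BorelSpace G]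
    (μG : Measure G) [μG.IsHaarMeasure] [μG.IsMulRightInvariant]
    {M : Type*} [TopologicalSpace M] [LocallyCompactSpace M] [T2Space M]
    [MulAction G M] [ContinuousSMul G M]
    (hproper : IsProperMap (fun p : G × M => (p.1 • p.2, p.2)))
    (a : M → ℝ) (ha_cont : Continuous a)
    (ha_inv : ∀ (g : G) (m : M), a (g • m) = a m)
    (K : Set M) (hK : IsCompact K)
    (c : ℝ) (hc : 0 < c)
    (hbound : ∀ x : M, x ∉ (⋃ g : G, g • K) → c ≤ a x) :
    ∃ f : M → ℝ, Continuous f ∧ (∀ x : M, 0 ≤ f x) ∧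
      (∀ (g : G) (x : M), f (g • x) = f x) ∧
      (∃ K' : Set M, IsCompact K' ∧ Function.support f ⊆ ⋃ g : G, g • K') ∧
      ∃ r : ℝ, 0 < r ∧ ∀ x : M, r ≤ a x + f x := by
  rcases K.eq_empty_or_nonempty with rfl | ⟨k₀, hk₀⟩
  · refine ⟨0, continuous_const, fun x => le_refl 0, fun g x => rfl,
      ⟨∅, isCompact_empty, by simp⟩, c, hc, fun x => ?_⟩
    have := hbound x (by simp)
    simpa using this
  -- Urysohn bump on `K`
  obtain ⟨φ, hφ1, -, hφsupp, hφmem⟩ :=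
    exists_continuous_one_zero_of_isCompact hK isClosed_empty (Set.disjoint_empty K)
  set Kφ : Set M := tsupport φ with hKφ
  have hKφc : IsCompact Kφ := hφsupp
  -- the averaged function
  set F : M → ℝ := fun x => ∫ g, φ (g⁻¹ • x) ∂μG with hF
  -- for each x, the integrand is continuous with compact support
  have hcont_x : ∀ x : M, Continuous fun g : G => φ (g⁻¹ • x) :=
    fun x => φ.continuous.comp (continuous_inv.smul continuous_const)
  have hsupp_x : ∀ x : M, HasCompactSupport fun g : G => φ (g⁻¹ • x) := by
    intro x
    apply HasCompactSupport.intro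
      (isCompact_transporter_aux hproper (A := Kφ) (B := {x}) hKφc isCompact_singleton)
    intro g hg
    by_contra h0
    exact hg ⟨g⁻¹ • x, subset_tsupport _ h0, by simp⟩
  have hInt : ∀ x : M, Integrable (fun g : G => φ (g⁻¹ • x)) μG :=
    fun x => (hcont_x x).integrable_of_hasCompactSupport (hsupp_x x)
  -- F nonnegative
  have hFnonneg : ∀ x : M, 0 ≤ F x :=
    fun x => integral_nonneg fun g => (hφmem _).1
  -- F invariant
  have hFinv : ∀ (h : G) (x : M), F (h • x) = F x := by
    intro h x
    have heq : (fun g : G => φ (g⁻¹ • (h • x))) = fun g : G => φ ((h⁻¹ * g)⁻¹ • x) := by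
      funext g
      rw [mul_inv_rev, inv_inv, mul_smul]
    simp only [hF, heq]
    exact integral_mul_left_eq_self (fun g : G => φ (g⁻¹ • x)) h⁻¹
  -- F continuous
  have hFcont : Continuous F := by
    rw [continuous_iff_continuousAt]
    intro x₀
    obtain ⟨N, hNc, hNmem⟩ := exists_compact_mem_nhds x₀
    set L : Set G := {g : G | ∃ m ∈ Kφ, g • m ∈ N} with hLdef
    have hLc : IsCompact L := isCompact_transporter_aux hproper hKφc hNc
    have hLmeas : MeasurableSet L := hLc.isClosed.measurableSet
    set ML : ℝ := (μG L).toReal with hML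
    have hMLnonneg : 0 ≤ ML := ENNReal.toReal_nonneg
    have key : ∀ δ : ℝ, 0 < δ → ∀ᶠ x in nhds x₀, ‖F x - F x₀‖ ≤ δ * ML := by
      intro δ hδ
      have hcontW : Continuous fun p : G × M => |φ (p.1⁻¹ • p.2) - φ (p.1⁻¹ • x₀)| :=
        ((φ.continuous.comp (continuous_fst.inv.smul continuous_snd)).sub
          (φ.continuous.comp (continuous_fst.inv.smul continuous_const))).abs
      have hW : IsOpen {p : G × M | |φ (p.1⁻¹ • p.2) - φ (p.1⁻¹ • x₀)| < δ} :=
        isOpen_lt hcontW continuous_const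
      have hsub : L ×ˢ ({x₀} : Set M) ⊆
          {p : G × M | |φ (p.1⁻¹ • p.2) - φ (p.1⁻¹ • x₀)| < δ} := by
        rintro ⟨g, y⟩ ⟨-, hy⟩
        rcases hy with rfl
        simpa using hδ
      obtain ⟨u, v, hu, hv, hLu, hx₀v, huv⟩ :=
        generalized_tube_lemma hLc isCompact_singleton hW hsub
      filter_upwards [hNmem, hv.mem_nhds (hx₀v rfl)] with x hxN hxv
      have hpt : ∀ g : G, ‖φ (g⁻¹ • x) - φ (g⁻¹ • x₀)‖ ≤ L.indicator (fun _ => δ) g := by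
        intro g
        by_cases hg : g ∈ L
        · rw [Set.indicator_of_mem hg]
          have := huv (Set.mk_mem_prod (hLu hg) hxv)
          simpa [Real.norm_eq_abs] using this.le
        · rw [Set.indicator_of_notMem hg]
          have h1 : φ (g⁻¹ • x) = 0 := by
            by_contra h0
            exact hg ⟨g⁻¹ • x, subset_tsupport _ h0, by simpa using hxN⟩
          have h2 : φ (g⁻¹ • x₀) = 0 := by
            by_contra h0
            exact hg ⟨g⁻¹ • x₀, subset_tsupport _ h0,
              by simpa using (mem_of_mem_nhds hNmem : x₀ ∈ N)⟩
          simp [h1, h2]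
      have hint_ind : Integrable (L.indicator fun _ : G => δ) μG := by
        rw [integrable_indicator_iff hLmeas]
        exact integrableOn_const hLc.measure_lt_top.ne
      have hFx : F x - F x₀ = ∫ g, (φ (g⁻¹ • x) - φ (g⁻¹ • x₀)) ∂μG :=
        (integral_sub (hInt x) (hInt x₀)).symm
      calc ‖F x - F x₀‖ = ‖∫ g, (φ (g⁻¹ • x) - φ (g⁻¹ • x₀)) ∂μG‖ := by rw [hFx]
        _ ≤ ∫ g, ‖φ (g⁻¹ • x) - φ (g⁻¹ • x₀)‖ ∂μG := norm_integral_le_integral_norm _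
        _ ≤ ∫ g, L.indicator (fun _ => δ) g ∂μG :=
            integral_mono ((hInt x).sub (hInt x₀)).norm hint_ind hpt
        _ = (μG L).toReal • δ := integral_indicator_const δ hLmeas
        _ = δ * ML := by rw [smul_eq_mul, mul_comm]
    rw [ContinuousAt, Metric.tendsto_nhds]
    intro ε hε
    have hδ : 0 < ε / (ML + 1) := by positivity
    filter_upwards [key _ hδ] with x hx
    rw [Real.dist_eq]
    have h1 : |F x - F x₀| ≤ ε / (ML + 1) * ML := by
      rw [← Real.norm_eq_abs]; exact hx
    have h2 : ε / (ML + 1) * ML < ε := by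
      rw [div_mul_eq_mul_div, div_lt_iff₀ (by linarith)]
      nlinarith
    linarith
  -- F is positive on K
  have hFpos : ∀ k ∈ K, 0 < F k := by
    intro k hk
    refine (integral_pos_iff_support_of_nonneg (fun g => (hφmem _).1) (hInt k)).mpr ?_
    have hopen : IsOpen (Function.support fun g : G => φ (g⁻¹ • k)) := by
      have heq : (Function.support fun g : G => φ (g⁻¹ • k)) =
          (fun g : G => φ (g⁻¹ • k)) ⁻¹' ({0}ᶜ) := by
        ext g; simp [Function.mem_support]
      rw [heq]
      exact isOpen_compl_singleton.preimage (hcont_x k)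
    refine hopen.measure_pos μG ⟨1, ?_⟩
    simp only [Function.mem_support, inv_one, one_smul]
    rw [hφ1 hk]
    simp
  -- minimum of F on K
  obtain ⟨k₁, hk₁K, hmin⟩ := hK.exists_isMinOn ⟨k₀, hk₀⟩ hFcont.continuousOn
  set ε : ℝ := F k₁ with hε
  have hεpos : 0 < ε := hFpos k₁ hk₁K
  -- minimum of a on K
  obtain ⟨k₂, hk₂K, hmina⟩ := hK.exists_isMinOn ⟨k₀, hk₀⟩ ha_cont.continuousOn
  set C : ℝ := c + max 0 (-(a k₂)) with hC
  have hCpos : 0 < C := by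
    have := le_max_left (0 : ℝ) (-(a k₂))
    simp only [hC]; linarith
  have hCε : 0 ≤ C / ε := (div_pos hCpos hεpos).le
  set f : M → ℝ := fun x => (C / ε) * F x with hf
  have hfnonneg : ∀ x : M, 0 ≤ f x := fun x => mul_nonneg hCε (hFnonneg x)
  refine ⟨f, (continuous_const.mul hFcont), hfnonneg, fun g x => by simp [hf, hFinv],
    ⟨Kφ, hKφc, ?_⟩, c, hc, ?_⟩
  · intro x hx
    have hFx : F x ≠ 0 := by
      intro h
      apply hx
      simp [hf, h]
    have hex : ∃ g : G, φ (g⁻¹ • x) ≠ 0 := by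
      by_contra h
      push_neg at h
      exact hFx (by simp [hF, h])
    obtain ⟨g, hg⟩ := hex
    refine Set.mem_iUnion.2 ⟨g, ?_⟩
    exact ⟨g⁻¹ • x, subset_tsupport _ hg, by simp⟩
  · intro x
    by_cases hx : x ∈ ⋃ g : G, g • K
    · obtain ⟨g, hgx⟩ := Set.mem_iUnion.1 hx
      obtain ⟨k, hkK, rfl⟩ := hgx
      have hax : a (g • k) = a k := ha_inv g k
      have hfx : f (g • k) = (C / ε) * F k := by simp [hf, hFinv]
      have hFk : ε ≤ F k := hmin hkK
      have h1 : C ≤ f (g • k) := by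
        rw [hfx]
        calc C = (C / ε) * ε := by field_simp
        _ ≤ (C / ε) * F k := mul_le_mul_of_nonneg_left hFk hCε
      have h2 : a k₂ ≤ a (g • k) := by rw [hax]; exact hmina hkK
      have h3 : 0 ≤ a k₂ + max 0 (-(a k₂)) := by
        rcases le_total 0 (a k₂) with h | h
        · have := le_max_left (0:ℝ) (-(a k₂)); linarith
        · rw [max_eq_right (by linarith)]; linarith
      have := hC
      linarith
    · have h1 := hbound x hx
      have h2 : 0 ≤ f x := hfnonneg x
      linarith
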